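/- Let a ≥ 0 and b ≥ 0 be real numbers. Then every complex root ω of the quadratic equation ω² + i·b·ω − a = 0 satisfies Im(ω) ≤ 0. -/
import Mathlib


open Complex in
/-- for `a ≥ 0`, `b ≥ 0`, every complex root of
`ω² + i·b·ω − a = 0` has nonpositive imaginary part (no exponentially
growing wavelength). -/
theorem dissipative_dispersion_stability (a b : ℝ) (ha : a ≥ 0) (hb : b ≥ 0)
    (ω : ℂ) (hroot : ω^2 + I * (b : ℂ) * ω - (a : ℂ) = 0) :
    ω.im ≤ 0 := by
  have h := Complex.ext_iff.mp hroot
  simp [Complex.add_im, Complex.add_re, Complex.mul_re, Complex.mul_im, pow_two] at h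
  obtain ⟨hre, him⟩ := h
  rcases mul_eq_zero.mp (show ω.re * (2 * ω.im + b) = 0 by ring_nf; linarith) with hx | hy
  · nlinarith [sq_nonneg ω.im]
  · linarith
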